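/- Let H be a connected graph of order n2 ≥ 3 with no true twin vertices, and let n1 ≥ 2. Then dim(K_{n1} ⊠ H) = n2·(n1 − 1). -/

import Mathlib

open SimpleGraph

/-- The strong product of two simple graphs. -/
def strongProd {α β : Type*} (G : SimpleGraph α) (H : SimpleGraph β) :
    SimpleGraph (α × β) where
  Adj x y := x ≠ y ∧ (x.1 = y.1 ∨ G.Adj x.1 y.1) ∧ (x.2 = y.2 ∨ H.Adj x.2 y.2)
  symm := by
    refine ⟨?_⟩
    rintro ⟨a, b⟩ ⟨c, d⟩ ⟨hne, h1, h2⟩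
    refine ⟨hne.symm, ?_, ?_⟩
    · rcases h1 with h | h
      · exact Or.inl h.symm
      · exact Or.inr h.symm
    · rcases h2 with h | h
      · exact Or.inl h.symm
      · exact Or.inr h.symm
  loopless := ⟨by rintro ⟨a, b⟩ ⟨hne, -, -⟩; exact hne rfl⟩

/-- A set `S` is a metric generator for `G` if every pair of distinct vertices is
distinguished by some element of `S`. -/
def IsMetricGen {α : Type*} (G : SimpleGraph α) (S : Set α) : Prop :=
  ∀ x y : α, x ≠ y → ∃ s ∈ S, G.dist x s ≠ G.dist y s

/-- The metric dimension of a graph: minimum cardinality of a metric generator. -/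
noncomputable def metricDim {α : Type*} (G : SimpleGraph α) : ℕ :=
  sInf {n | ∃ S : Set α, IsMetricGen G S ∧ S.ncard = n}

/-- `G` is self `k`-resolved if for all distinct `x, y` there is `w` such that
`d(y,w) ≥ k` and `x` lies on a shortest `y`–`w` path, or symmetrically. -/
def SelfResolved {α : Type*} (G : SimpleGraph α) (k : ℕ) : Prop :=
  ∀ x y : α, x ≠ y → ∃ w : α,
    (k ≤ G.dist y w ∧ G.dist y x + G.dist x w = G.dist y w) ∨
    (k ≤ G.dist x w ∧ G.dist x y + G.dist y w = G.dist x w)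

/-- Two vertices are true twins if their closed neighborhoods coincide. -/
def TrueTwins {α : Type*} (G : SimpleGraph α) (u v : α) : Prop :=
  insert u (G.neighborSet u) = insert v (G.neighborSet v)

/-- The number of equivalence classes of the true twin relation. -/
noncomputable def numTrueTwinClasses {α : Type*} (G : SimpleGraph α) : ℕ :=
  Nat.card (Quotient (Setoid.ker (fun v => insert v (G.neighborSet v))))

namespace Stmt14Aux

open scoped Classical

variable {β : Type*} {H : SimpleGraph β} {n1 : ℕ}

def liftWalk (c : Fin n1) : {b d : β} → H.Walk b d →
    (strongProd (⊤ : SimpleGraph (Fin n1)) H).Walk (c, b) (c, d)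
  | _, _, SimpleGraph.Walk.nil => SimpleGraph.Walk.nil
  | _, _, @SimpleGraph.Walk.cons _ _ b v d h w =>
      SimpleGraph.Walk.cons (v := (c, v)) ⟨by simp [h.ne], Or.inl rfl, Or.inr h⟩ (liftWalk c w)

lemma length_liftWalk (c : Fin n1) : ∀ {b d : β} (w : H.Walk b d),
    (liftWalk c w).length = w.length
  | _, _, SimpleGraph.Walk.nil => by simp [liftWalk]
  | _, _, @SimpleGraph.Walk.cons _ _ b v d h w => by
      simp [liftWalk, length_liftWalk c w]
      exact congrArg (· + 1) (length_liftWalk c w)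

lemma snd_dist_le_length (hH : H.Connected) {x y : Fin n1 × β}
    (w : (strongProd (⊤ : SimpleGraph (Fin n1)) H).Walk x y) :
    H.dist x.2 y.2 ≤ w.length := by
  induction w with
  | nil => simp
  | @cons u v t h p ih =>
    have h1 : H.dist u.2 v.2 ≤ 1 := by
      rcases h.2.2 with he | ha
      · rw [he, SimpleGraph.dist_self]; omega
      · rw [SimpleGraph.dist_eq_one_iff_adj.mpr ha]
    have := hH.dist_triangle (u := u.2) (v := v.2) (w := t.2)
    simp only [SimpleGraph.Walk.length_cons]
    omega

lemma dist_eq (hH : H.Connected) (a c : Fin n1) (b d : β) :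
    (strongProd (⊤ : SimpleGraph (Fin n1)) H).dist (a, b) (c, d) =
      if b = d then (if a = c then 0 else 1) else H.dist b d := by
  by_cases hbd : b = d
  · subst hbd
    rw [if_pos rfl]
    by_cases hac : a = c
    · subst hac; simp
    · rw [if_neg hac]
      exact SimpleGraph.dist_eq_one_iff_adj.mpr
        ⟨by simp [hac], Or.inr (by simpa using hac), Or.inl rfl⟩
  · rw [if_neg hbd]
    obtain ⟨W, hW⟩ : ∃ w : (strongProd (⊤ : SimpleGraph (Fin n1)) H).Walk (a, b) (c, d),
        w.length = H.dist b d := by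
      obtain ⟨w, hw⟩ := hH.exists_walk_length_eq_dist b d
      by_cases hac : a = c
      · subst hac; exact ⟨liftWalk a w, by rw [length_liftWalk, hw]⟩
      · cases w with
        | nil => exact absurd rfl hbd
        | @cons _ v _ h p =>
          refine ⟨SimpleGraph.Walk.cons
            ⟨by simp [hac], Or.inr (by simpa using hac), Or.inr h⟩ (liftWalk c p), ?_⟩
          show (liftWalk c p).length + 1 = _; rw [length_liftWalk]
          simpa using hw
    refine le_antisymm (hW ▸ SimpleGraph.dist_le W) ?_
    have hne : (a, b) ≠ (c, d) := by simp [hbd]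
    have hd0 : (strongProd (⊤ : SimpleGraph (Fin n1)) H).dist (a, b) (c, d) ≠ 0 :=
      SimpleGraph.dist_ne_zero_iff_ne_and_reachable.mpr ⟨hne, ⟨W⟩⟩
    obtain ⟨p, hp⟩ := SimpleGraph.exists_walk_of_dist_ne_zero hd0
    calc H.dist b d ≤ p.length := snd_dist_le_length hH p
      _ = _ := hp

lemma key (htwin : ∀ u v : β, TrueTwins H u v → u = v) {b d : β} (hbd : b ≠ d) :
    ∃ f : β, (if b = f then 1 else H.dist b f) ≠ (if d = f then 1 else H.dist d f) := by
  by_contra hcon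
  push_neg at hcon
  have hadj : H.Adj b d := by
    have h := hcon d
    rw [if_neg hbd, if_pos rfl] at h
    exact SimpleGraph.dist_eq_one_iff_adj.mp h
  have hsub : ∀ u v : β, H.Adj u v →
      (∀ f, (if u = f then 1 else H.dist u f) = (if v = f then 1 else H.dist v f)) →
      insert u (H.neighborSet u) ⊆ insert v (H.neighborSet v) := by
    intro u v huv h x hx
    rcases Set.mem_insert_iff.mp hx with rfl | hux
    · exact Set.mem_insert_iff.mpr (Or.inr huv.symm)
    · rw [SimpleGraph.mem_neighborSet] at hux
      by_cases hxv : x = v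
      · exact Set.mem_insert_iff.mpr (Or.inl hxv)
      · have hx1 := h x
        rw [if_neg hux.ne, if_neg (Ne.symm hxv)] at hx1
        have : H.dist v x = 1 := by
          rw [← hx1]; exact SimpleGraph.dist_eq_one_iff_adj.mpr hux
        exact Set.mem_insert_iff.mpr (Or.inr (SimpleGraph.dist_eq_one_iff_adj.mp this))
  have htt : TrueTwins H b d :=
    Set.Subset.antisymm (hsub b d hadj hcon) (hsub d b hadj.symm fun f => (hcon f).symm)
  exact hbd (htwin _ _ htt)

lemma lower [Fintype β] (hH : H.Connected) (S : Set (Fin n1 × β))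
    (hS : IsMetricGen (strongProd (⊤ : SimpleGraph (Fin n1)) H) S) :
    Fintype.card β * (n1 - 1) ≤ S.ncard := by
  have hfin : S.Finite := Set.toFinite S
  rw [Set.ncard_eq_toFinset_card S hfin]
  rw [Finset.card_eq_sum_card_fiberwise (f := Prod.snd) (t := Finset.univ)
    (fun x _ => Finset.mem_univ _)]
  have hb : ∀ b : β, n1 - 1 ≤ (hfin.toFinset.filter (fun x => x.2 = b)).card := by
    intro b
    have hinj : (Finset.univ.filter (fun a : Fin n1 => (a, b) ∈ S)).card ≤
        (hfin.toFinset.filter (fun x => x.2 = b)).card := by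
      apply Finset.card_le_card_of_injOn (fun a => (a, b))
      · intro a ha
        simp only [Finset.mem_coe, Finset.mem_filter, Finset.mem_univ, true_and] at ha
        simp only [Finset.mem_coe, Finset.mem_filter, Set.Finite.mem_toFinset]
        exact ⟨ha, trivial⟩
      · intro a _ a' _ h
        exact congrArg Prod.fst h
    have hcompl : (Finset.univ.filter (fun a : Fin n1 => (a, b) ∉ S)).card ≤ 1 := by
      rw [Finset.card_le_one]
      intro a ha c hc
      by_contra hac
      simp only [Finset.mem_filter, Finset.mem_univ, true_and] at ha hc
      obtain ⟨s, hsS, hdist⟩ := hS (a, b) (c, b) (by simp [hac])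
      obtain ⟨e, f⟩ := s
      rw [dist_eq hH, dist_eq hH] at hdist
      by_cases hbf : b = f
      · subst hbf
        rw [if_pos rfl, if_pos rfl] at hdist
        by_cases hae : a = e
        · subst hae; exact ha hsS
        · by_cases hce : c = e
          · subst hce; exact hc hsS
          · rw [if_neg hae, if_neg hce] at hdist; exact hdist rfl
      · rw [if_neg hbf, if_neg hbf] at hdist; exact hdist rfl
    have htot := Finset.card_filter_add_card_filter_not
      (s := (Finset.univ : Finset (Fin n1))) (p := fun a => (a, b) ∈ S)
    rw [Finset.card_univ, Fintype.card_fin] at htot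
    omega
  calc Fintype.card β * (n1 - 1) = ∑ _b : β, (n1 - 1) := by
        rw [Finset.sum_const, Finset.card_univ, smul_eq_mul]
    _ ≤ _ := Finset.sum_le_sum fun b _ => hb b

end Stmt14Aux

theorem stmt_14 {β : Type*} [Fintype β] (H : SimpleGraph β) (n1 : ℕ)
    (hH : H.Connected) (hcard : 3 ≤ Fintype.card β)
    (htwin : ∀ u v : β, TrueTwins H u v → u = v) (hn1 : 2 ≤ n1) :
    metricDim (strongProd (⊤ : SimpleGraph (Fin n1)) H) =
      Fintype.card β * (n1 - 1) := by
  classical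
  have hz1 : 0 < n1 := by omega
  set z : Fin n1 := ⟨0, hz1⟩ with hzdef
  set e1 : Fin n1 := ⟨1, by omega⟩ with he1def
  have hze1 : z ≠ e1 := by simp [hzdef, he1def, Fin.ext_iff]
  set S : Set (Fin n1 × β) := ({z}ᶜ : Set (Fin n1)) ×ˢ (Set.univ : Set β) with hSdef
  have hmemS : ∀ p : Fin n1 × β, p ∈ S ↔ p.1 ≠ z := by
    intro p; simp [hSdef]
  have hgen : IsMetricGen (strongProd (⊤ : SimpleGraph (Fin n1)) H) S := by
    rintro ⟨a, b⟩ ⟨c, d⟩ hxy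
    by_cases hbd : b = d
    · subst hbd
      have hac : a ≠ c := fun h => hxy (by rw [h])
      by_cases haz : a = z
      · have hcz : c ≠ z := fun h => hac (haz.trans h.symm)
        refine ⟨(c, b), (hmemS _).mpr hcz, ?_⟩
        rw [Stmt14Aux.dist_eq hH, Stmt14Aux.dist_eq hH]
        simp [hac]
      · refine ⟨(a, b), (hmemS _).mpr haz, ?_⟩
        rw [Stmt14Aux.dist_eq hH, Stmt14Aux.dist_eq hH]
        simp [Ne.symm hac]
    · by_cases haz : a = z
      · by_cases hcz : c = z
        · obtain ⟨f, hf⟩ := Stmt14Aux.key htwin hbd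
          refine ⟨(e1, f), (hmemS _).mpr (Ne.symm hze1), ?_⟩
          rw [Stmt14Aux.dist_eq hH, Stmt14Aux.dist_eq hH]
          have h1 : a ≠ e1 := by rw [haz]; exact hze1
          have h2 : c ≠ e1 := by rw [hcz]; exact hze1
          rw [if_neg h1, if_neg h2]
          exact hf
        · refine ⟨(c, d), (hmemS _).mpr hcz, ?_⟩
          rw [Stmt14Aux.dist_eq hH, Stmt14Aux.dist_eq hH]
          have hpos := hH.pos_dist_of_ne hbd
          simp [hbd]
          exact hH.preconnected b d
      · refine ⟨(a, b), (hmemS _).mpr haz, ?_⟩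
        rw [Stmt14Aux.dist_eq hH, Stmt14Aux.dist_eq hH]
        have hpos := hH.pos_dist_of_ne (Ne.symm hbd)
        simp [Ne.symm hbd]
        omega
  have hcardS : S.ncard = Fintype.card β * (n1 - 1) := by
    have e : ↥S ≃ ↥({z}ᶜ : Set (Fin n1)) × ↥(Set.univ : Set β) := Equiv.Set.prod _ _
    have h1 : S.ncard = ({z}ᶜ : Set (Fin n1)).ncard * (Set.univ : Set β).ncard := by
      rw [← Nat.card_coe_set_eq, ← Nat.card_coe_set_eq, ← Nat.card_coe_set_eq,
        Nat.card_congr e, Nat.card_prod]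
    have h2 : ({z}ᶜ : Set (Fin n1)).ncard = n1 - 1 := by
      have h3 : ({z} : Set (Fin n1)).ncard + ({z}ᶜ : Set (Fin n1)).ncard
          = Nat.card (Fin n1) := Set.ncard_add_ncard_compl _
      simp only [Set.ncard_singleton, Set.ncard_univ, Nat.card_eq_fintype_card,
        Fintype.card_fin] at h3
      omega
    rw [h1, h2]
    rw [show (Set.univ : Set β).ncard = Fintype.card β from by
      simp [Set.ncard_univ, Nat.card_eq_fintype_card]]
    exact Nat.mul_comm _ _
  apply le_antisymm
  · exact Nat.sInf_le ⟨S, hgen, hcardS⟩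
  · refine le_csInf ⟨_, S, hgen, hcardS⟩ ?_
    rintro n ⟨T, hTgen, rfl⟩
    exact Stmt14Aux.lower hH T hTgen
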